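/- For every ν > 0 and every δ ∈ (√(2/3), √(3/2)), the real subspace is invariant for the center-manifold ODE model: if ω1, ω3, ω5, ω7 : [0,∞) → ℂ solve the system and Im ω1(0) = Im ω3(0) = Im ω5(0) = Im ω7(0) = 0, then Im ω1(t) = Im ω3(t) = Im ω5(t) = Im ω7(t) = 0 for all t ≥ 0. -/

import Mathlib

open Set Complex

private lemma lin_bound4 (a1 a3 a5 a7 v1 v3 v5 v7 V : ℝ)
    (h1 : |v1| ≤ V) (h3 : |v3| ≤ V) (h5 : |v5| ≤ V) (h7 : |v7| ≤ V) :
    |a1 * v1 + a3 * v3 + a5 * v5 + a7 * v7| ≤ (|a1| + |a3| + |a5| + |a7|) * V := by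
  calc |a1 * v1 + a3 * v3 + a5 * v5 + a7 * v7|
      ≤ |a1 * v1 + a3 * v3 + a5 * v5| + |a7 * v7| := abs_add_le _ _
    _ ≤ (|a1 * v1| + |a3 * v3| + |a5 * v5|) + |a7 * v7| :=
        add_le_add_left (abs_add_three _ _ _) _
    _ ≤ (|a1| * V + |a3| * V + |a5| * V) + |a7| * V := by
        rw [abs_mul, abs_mul, abs_mul, abs_mul]
        have n1 := abs_nonneg a1; have n3 := abs_nonneg a3
        have n5 := abs_nonneg a5; have n7 := abs_nonneg a7
        gcongr
    _ = (|a1| + |a3| + |a5| + |a7|) * V := by ring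

private noncomputable def E1fun (ν δ : ℝ) (z1 z3 z5 z7 : ℂ) : ℂ :=
  -((ν / δ ^ 2 : ℝ) : ℂ) * z1
    + ((1 / (δ * (1 + δ ^ 2)) : ℝ) : ℂ) * (z3 * z7 - (starRingEnd ℂ) z3 * z5)
    + ((3 * δ ^ 6 / (2 * ν * (4 + δ ^ 2) * (1 + δ ^ 2) ^ 2) : ℝ) : ℂ) * z1
        * ((‖z5‖ ^ 2 + ‖z7‖ ^ 2 : ℝ) : ℂ)

private noncomputable def E3fun (ν δ : ℝ) (z1 z3 z5 z7 : ℂ) : ℂ :=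
  -(ν : ℂ) * z3
    + ((δ ^ 3 / (1 + δ ^ 2) : ℝ) : ℂ) * ((starRingEnd ℂ) z1 * z5 - z1 * (starRingEnd ℂ) z7)
    + ((3 * δ ^ 2 / (2 * ν * (1 + 4 * δ ^ 2) * (1 + δ ^ 2) ^ 2) : ℝ) : ℂ) * z3
        * ((‖z5‖ ^ 2 + ‖z7‖ ^ 2 : ℝ) : ℂ)

private noncomputable def E5fun (ν δ : ℝ) (z1 z3 z5 z7 : ℂ) : ℂ :=
  -((ν * (1 + δ ^ 2) / δ ^ 2 : ℝ) : ℂ) * z5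
    - (((δ ^ 2 - 1) / δ : ℝ) : ℂ) * z1 * z3
    - ((δ ^ 6 * (3 + δ ^ 2) / (2 * ν * (4 + δ ^ 2) * (1 + δ ^ 2)) : ℝ) : ℂ) * z5
        * ((‖z1‖ ^ 2 : ℝ) : ℂ)
    - (((1 + 3 * δ ^ 2) / (2 * ν * δ ^ 2 * (1 + 4 * δ ^ 2) * (1 + δ ^ 2)) : ℝ) : ℂ) * z5
        * ((‖z3‖ ^ 2 : ℝ) : ℂ)

private noncomputable def E7fun (ν δ : ℝ) (z1 z3 z5 z7 : ℂ) : ℂ :=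
  -((ν * (1 + δ ^ 2) / δ ^ 2 : ℝ) : ℂ) * z7
    + (((δ ^ 2 - 1) / δ : ℝ) : ℂ) * z1 * (starRingEnd ℂ) z3
    - ((δ ^ 6 * (3 + δ ^ 2) / (2 * ν * (4 + δ ^ 2) * (1 + δ ^ 2)) : ℝ) : ℂ) * z7
        * ((‖z1‖ ^ 2 : ℝ) : ℂ)
    - (((1 + 3 * δ ^ 2) / (2 * ν * δ ^ 2 * (1 + 4 * δ ^ 2) * (1 + δ ^ 2)) : ℝ) : ℂ) * z7
        * ((‖z3‖ ^ 2 : ℝ) : ℂ)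

private lemma prod_norm_eq (p : (ℝ × ℝ) × (ℝ × ℝ)) :
    ‖p‖ = max (max |p.1.1| |p.1.2|) (max |p.2.1| |p.2.2|) := by
  simp [Prod.norm_def, Real.norm_eq_abs]

private lemma im1 (ν δ : ℝ) (z1 z3 z5 z7 : ℂ) :
    (E1fun ν δ z1 z3 z5 z7).im
      = (-(ν / δ ^ 2) + (3 * δ ^ 6 / (2 * ν * (4 + δ ^ 2) * (1 + δ ^ 2) ^ 2))
            * (‖z5‖ ^ 2 + ‖z7‖ ^ 2)) * z1.im
        + ((1 / (δ * (1 + δ ^ 2))) * (z7.re + z5.re)) * z3.im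
        + (-((1 / (δ * (1 + δ ^ 2))) * z3.re)) * z5.im
        + ((1 / (δ * (1 + δ ^ 2))) * z3.re) * z7.im := by
  simp only [E1fun, add_im, sub_im, neg_im, mul_im, mul_re, ofReal_re, ofReal_im, conj_re,
    conj_im, neg_re, zero_mul, mul_zero, sub_zero, zero_add, add_zero, neg_zero, neg_neg, mul_neg]
  ring

private lemma im3 (ν δ : ℝ) (z1 z3 z5 z7 : ℂ) :
    (E3fun ν δ z1 z3 z5 z7).im
      = (-((δ ^ 3 / (1 + δ ^ 2)) * (z5.re + z7.re))) * z1.im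
        + (-ν + (3 * δ ^ 2 / (2 * ν * (1 + 4 * δ ^ 2) * (1 + δ ^ 2) ^ 2))
            * (‖z5‖ ^ 2 + ‖z7‖ ^ 2)) * z3.im
        + ((δ ^ 3 / (1 + δ ^ 2)) * z1.re) * z5.im
        + ((δ ^ 3 / (1 + δ ^ 2)) * z1.re) * z7.im := by
  simp only [E3fun, add_im, sub_im, neg_im, mul_im, mul_re, ofReal_re, ofReal_im, conj_re,
    conj_im, neg_re, zero_mul, mul_zero, sub_zero, zero_add, add_zero, neg_zero, neg_neg,
    mul_neg, Complex.neg_im]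
  ring

private lemma im5 (ν δ : ℝ) (z1 z3 z5 z7 : ℂ) :
    (E5fun ν δ z1 z3 z5 z7).im
      = (-(((δ ^ 2 - 1) / δ) * z3.re)) * z1.im
        + (-(((δ ^ 2 - 1) / δ) * z1.re)) * z3.im
        + (-(ν * (1 + δ ^ 2) / δ ^ 2)
            - (δ ^ 6 * (3 + δ ^ 2) / (2 * ν * (4 + δ ^ 2) * (1 + δ ^ 2))) * ‖z1‖ ^ 2
            - ((1 + 3 * δ ^ 2) / (2 * ν * δ ^ 2 * (1 + 4 * δ ^ 2) * (1 + δ ^ 2)))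
                * ‖z3‖ ^ 2) * z5.im
        + (0 : ℝ) * z7.im := by
  simp only [E5fun, add_im, sub_im, neg_im, mul_im, mul_re, ofReal_re, ofReal_im, conj_re,
    conj_im, neg_re, zero_mul, mul_zero, sub_zero, zero_add, add_zero, neg_zero, neg_neg, mul_neg]
  ring

private lemma im7 (ν δ : ℝ) (z1 z3 z5 z7 : ℂ) :
    (E7fun ν δ z1 z3 z5 z7).im
      = ((((δ ^ 2 - 1) / δ) * z3.re)) * z1.im
        + (-(((δ ^ 2 - 1) / δ) * z1.re)) * z3.im
        + (0 : ℝ) * z5.im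
        + (-(ν * (1 + δ ^ 2) / δ ^ 2)
            - (δ ^ 6 * (3 + δ ^ 2) / (2 * ν * (4 + δ ^ 2) * (1 + δ ^ 2))) * ‖z1‖ ^ 2
            - ((1 + 3 * δ ^ 2) / (2 * ν * δ ^ 2 * (1 + 4 * δ ^ 2) * (1 + δ ^ 2)))
                * ‖z3‖ ^ 2) * z7.im := by
  simp only [E7fun, add_im, sub_im, neg_im, mul_im, mul_re, ofReal_re, ofReal_im, conj_re,
    conj_im, neg_re, zero_mul, mul_zero, sub_zero, zero_add, add_zero, neg_zero, neg_neg, mul_neg]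
  ring

set_option maxHeartbeats 1000000 in
theorem real_subspace_invariant
    (ν δ : ℝ) (hν : 0 < ν)
    (hδ1 : Real.sqrt (2 / 3) < δ) (hδ2 : δ < Real.sqrt (3 / 2))
    (ω1 ω3 ω5 ω7 : ℝ → ℂ)
    (h1 : ∀ t : ℝ, 0 ≤ t → HasDerivAt ω1
      (-((ν / δ ^ 2 : ℝ) : ℂ) * ω1 t
        + ((1 / (δ * (1 + δ ^ 2)) : ℝ) : ℂ) * (ω3 t * ω7 t - (starRingEnd ℂ) (ω3 t) * ω5 t)
        + ((3 * δ ^ 6 / (2 * ν * (4 + δ ^ 2) * (1 + δ ^ 2) ^ 2) : ℝ) : ℂ) * ω1 t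
            * ((‖ω5 t‖ ^ 2 + ‖ω7 t‖ ^ 2 : ℝ) : ℂ)) t)
    (h3 : ∀ t : ℝ, 0 ≤ t → HasDerivAt ω3
      (-(ν : ℂ) * ω3 t
        + ((δ ^ 3 / (1 + δ ^ 2) : ℝ) : ℂ) * ((starRingEnd ℂ) (ω1 t) * ω5 t - ω1 t * (starRingEnd ℂ) (ω7 t))
        + ((3 * δ ^ 2 / (2 * ν * (1 + 4 * δ ^ 2) * (1 + δ ^ 2) ^ 2) : ℝ) : ℂ) * ω3 t
            * ((‖ω5 t‖ ^ 2 + ‖ω7 t‖ ^ 2 : ℝ) : ℂ)) t)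
    (h5 : ∀ t : ℝ, 0 ≤ t → HasDerivAt ω5
      (-((ν * (1 + δ ^ 2) / δ ^ 2 : ℝ) : ℂ) * ω5 t
        - (((δ ^ 2 - 1) / δ : ℝ) : ℂ) * ω1 t * ω3 t
        - ((δ ^ 6 * (3 + δ ^ 2) / (2 * ν * (4 + δ ^ 2) * (1 + δ ^ 2)) : ℝ) : ℂ) * ω5 t
            * ((‖ω1 t‖ ^ 2 : ℝ) : ℂ)
        - (((1 + 3 * δ ^ 2) / (2 * ν * δ ^ 2 * (1 + 4 * δ ^ 2) * (1 + δ ^ 2)) : ℝ) : ℂ) * ω5 t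
            * ((‖ω3 t‖ ^ 2 : ℝ) : ℂ)) t)
    (h7 : ∀ t : ℝ, 0 ≤ t → HasDerivAt ω7
      (-((ν * (1 + δ ^ 2) / δ ^ 2 : ℝ) : ℂ) * ω7 t
        + (((δ ^ 2 - 1) / δ : ℝ) : ℂ) * ω1 t * (starRingEnd ℂ) (ω3 t)
        - ((δ ^ 6 * (3 + δ ^ 2) / (2 * ν * (4 + δ ^ 2) * (1 + δ ^ 2)) : ℝ) : ℂ) * ω7 t
            * ((‖ω1 t‖ ^ 2 : ℝ) : ℂ)
        - (((1 + 3 * δ ^ 2) / (2 * ν * δ ^ 2 * (1 + 4 * δ ^ 2) * (1 + δ ^ 2)) : ℝ) : ℂ) * ω7 t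
            * ((‖ω3 t‖ ^ 2 : ℝ) : ℂ)) t)
    (hinit : (ω1 0).im = 0 ∧ (ω3 0).im = 0 ∧ (ω5 0).im = 0 ∧ (ω7 0).im = 0) :
    ∀ t : ℝ, 0 ≤ t → (ω1 t).im = 0 ∧ (ω3 t).im = 0 ∧ (ω5 t).im = 0 ∧ (ω7 t).im = 0 := by
  obtain ⟨hi1, hi3, hi5, hi7⟩ := hinit
  intro T hT
  -- the vector of imaginary parts
  set f : ℝ → (ℝ × ℝ) × (ℝ × ℝ) :=
    fun s => (((ω1 s).im, (ω3 s).im), ((ω5 s).im, (ω7 s).im)) with hfdef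
  set D : ℝ → (ℝ × ℝ) × (ℝ × ℝ) :=
    fun s => (((E1fun ν δ (ω1 s) (ω3 s) (ω5 s) (ω7 s)).im,
               (E3fun ν δ (ω1 s) (ω3 s) (ω5 s) (ω7 s)).im),
              ((E5fun ν δ (ω1 s) (ω3 s) (ω5 s) (ω7 s)).im,
               (E7fun ν δ (ω1 s) (ω3 s) (ω5 s) (ω7 s)).im)) with hDdef
  -- continuity of the solutions on [0, T]
  have hc1 : ContinuousOn ω1 (Icc 0 T) := fun s hs => (h1 s hs.1).continuousAt.continuousWithinAt
  have hc3 : ContinuousOn ω3 (Icc 0 T) := fun s hs => (h3 s hs.1).continuousAt.continuousWithinAt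
  have hc5 : ContinuousOn ω5 (Icc 0 T) := fun s hs => (h5 s hs.1).continuousAt.continuousWithinAt
  have hc7 : ContinuousOn ω7 (Icc 0 T) := fun s hs => (h7 s hs.1).continuousAt.continuousWithinAt
  -- uniform bound on solutions
  obtain ⟨M, hM⟩ := isCompact_Icc.exists_bound_of_continuousOn
    ((hc1.prodMk hc3).prodMk (hc5.prodMk hc7))
  have hM0 : 0 ≤ M := le_trans (norm_nonneg _) (hM 0 ⟨le_refl 0, hT⟩)
  have hb1 : ∀ s ∈ Icc (0:ℝ) T, ‖ω1 s‖ ≤ M := fun s hs => by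
    calc ‖ω1 s‖ = ‖ω1 s‖ := rfl
      _ ≤ ‖(ω1 s, ω3 s)‖ := norm_fst_le (ω1 s, ω3 s)
      _ ≤ ‖((ω1 s, ω3 s), (ω5 s, ω7 s))‖ := norm_fst_le ((ω1 s, ω3 s), (ω5 s, ω7 s))
      _ ≤ M := hM s hs
  have hb3 : ∀ s ∈ Icc (0:ℝ) T, ‖ω3 s‖ ≤ M := fun s hs => by
    calc ‖ω3 s‖ = ‖ω3 s‖ := rfl
      _ ≤ ‖(ω1 s, ω3 s)‖ := norm_snd_le (ω1 s, ω3 s)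
      _ ≤ ‖((ω1 s, ω3 s), (ω5 s, ω7 s))‖ := norm_fst_le ((ω1 s, ω3 s), (ω5 s, ω7 s))
      _ ≤ M := hM s hs
  have hb5 : ∀ s ∈ Icc (0:ℝ) T, ‖ω5 s‖ ≤ M := fun s hs => by
    calc ‖ω5 s‖ = ‖ω5 s‖ := rfl
      _ ≤ ‖(ω5 s, ω7 s)‖ := norm_fst_le (ω5 s, ω7 s)
      _ ≤ ‖((ω1 s, ω3 s), (ω5 s, ω7 s))‖ := norm_snd_le ((ω1 s, ω3 s), (ω5 s, ω7 s))
      _ ≤ M := hM s hs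
  have hb7 : ∀ s ∈ Icc (0:ℝ) T, ‖ω7 s‖ ≤ M := fun s hs => by
    calc ‖ω7 s‖ = ‖ω7 s‖ := rfl
      _ ≤ ‖(ω5 s, ω7 s)‖ := norm_snd_le (ω5 s, ω7 s)
      _ ≤ ‖((ω1 s, ω3 s), (ω5 s, ω7 s))‖ := norm_snd_le ((ω1 s, ω3 s), (ω5 s, ω7 s))
      _ ≤ M := hM s hs
  -- the Lipschitz-type constant
  set K : ℝ := |ν / δ ^ 2| + |ν| + 2 * |ν * (1 + δ ^ 2) / δ ^ 2|
      + 4 * M * |1 / (δ * (1 + δ ^ 2))| + 4 * M * |δ ^ 3 / (1 + δ ^ 2)|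
      + 4 * M * |(δ ^ 2 - 1) / δ|
      + 2 * M ^ 2 * |3 * δ ^ 6 / (2 * ν * (4 + δ ^ 2) * (1 + δ ^ 2) ^ 2)|
      + 2 * M ^ 2 * |3 * δ ^ 2 / (2 * ν * (1 + 4 * δ ^ 2) * (1 + δ ^ 2) ^ 2)|
      + 2 * M ^ 2 * |δ ^ 6 * (3 + δ ^ 2) / (2 * ν * (4 + δ ^ 2) * (1 + δ ^ 2))|
      + 2 * M ^ 2 * |(1 + 3 * δ ^ 2) / (2 * ν * δ ^ 2 * (1 + 4 * δ ^ 2) * (1 + δ ^ 2))|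
    with hKdef
  -- continuity of f
  have hfc : ContinuousOn f (Icc 0 T) :=
    ((Complex.continuous_im.comp_continuousOn hc1).prodMk
      (Complex.continuous_im.comp_continuousOn hc3)).prodMk
      ((Complex.continuous_im.comp_continuousOn hc5).prodMk
        (Complex.continuous_im.comp_continuousOn hc7))
  -- derivative of f
  have hfd : ∀ x ∈ Ico (0:ℝ) T, HasDerivWithinAt f (D x) (Ici x) x := by
    intro x hx
    have d1 : HasDerivAt (fun s => (ω1 s).im) (E1fun ν δ (ω1 x) (ω3 x) (ω5 x) (ω7 x)).im x := by
        have h := Complex.imCLM.hasFDerivAt.comp_hasDerivAt x (h1 x hx.1)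
        simp only [Function.comp_def, Complex.imCLM_apply] at h
        exact h
    have d3 : HasDerivAt (fun s => (ω3 s).im) (E3fun ν δ (ω1 x) (ω3 x) (ω5 x) (ω7 x)).im x := by
        have h := Complex.imCLM.hasFDerivAt.comp_hasDerivAt x (h3 x hx.1)
        simp only [Function.comp_def, Complex.imCLM_apply] at h
        exact h
    have d5 : HasDerivAt (fun s => (ω5 s).im) (E5fun ν δ (ω1 x) (ω3 x) (ω5 x) (ω7 x)).im x := by
        have h := Complex.imCLM.hasFDerivAt.comp_hasDerivAt x (h5 x hx.1)
        simp only [Function.comp_def, Complex.imCLM_apply] at h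
        exact h
    have d7 : HasDerivAt (fun s => (ω7 s).im) (E7fun ν δ (ω1 x) (ω3 x) (ω5 x) (ω7 x)).im x := by
        have h := Complex.imCLM.hasFDerivAt.comp_hasDerivAt x (h7 x hx.1)
        simp only [Function.comp_def, Complex.imCLM_apply] at h
        exact h
    rw [hfdef, hDdef]
    exact (((d1.prodMk d3).prodMk (d5.prodMk d7)).hasDerivWithinAt)
  -- initial condition
  have ha : ‖f 0‖ ≤ 0 := by
    have : f 0 = 0 := by
      simp only [hfdef, hi1, hi3, hi5, hi7]; rfl
    simp [this]
  -- the Grönwall bound hypothesis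
  have hbound : ∀ x ∈ Ico (0:ℝ) T, ‖D x‖ ≤ K * ‖f x‖ + 0 := by
    intro x hx
    have hx' : x ∈ Icc (0:ℝ) T := ⟨hx.1, le_of_lt hx.2⟩
    have hV : (0:ℝ) ≤ ‖f x‖ := norm_nonneg _
    have hre1 : |(ω1 x).re| ≤ M := (Complex.abs_re_le_norm _).trans (hb1 x hx')
    have hre3 : |(ω3 x).re| ≤ M := (Complex.abs_re_le_norm _).trans (hb3 x hx')
    have hre5 : |(ω5 x).re| ≤ M := (Complex.abs_re_le_norm _).trans (hb5 x hx')
    have hre7 : |(ω7 x).re| ≤ M := (Complex.abs_re_le_norm _).trans (hb7 x hx')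
    have hA1 : ‖ω1 x‖ ^ 2 ≤ M ^ 2 :=
      pow_le_pow_left₀ (norm_nonneg _) (hb1 x hx') 2
    have hA3 : ‖ω3 x‖ ^ 2 ≤ M ^ 2 :=
      pow_le_pow_left₀ (norm_nonneg _) (hb3 x hx') 2
    have hA5 : ‖ω5 x‖ ^ 2 ≤ M ^ 2 :=
      pow_le_pow_left₀ (norm_nonneg _) (hb5 x hx') 2
    have hA7 : ‖ω7 x‖ ^ 2 ≤ M ^ 2 :=
      pow_le_pow_left₀ (norm_nonneg _) (hb7 x hx') 2
    have hv1 : |(ω1 x).im| ≤ ‖f x‖ := by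
      have h : ‖(f x).1.1‖ ≤ ‖f x‖ := (norm_fst_le ((f x).1)).trans (norm_fst_le (f x))
      rwa [show (f x).1.1 = (ω1 x).im from by rw [hfdef], Real.norm_eq_abs] at h
    have hv3 : |(ω3 x).im| ≤ ‖f x‖ := by
      have h : ‖(f x).1.2‖ ≤ ‖f x‖ := (norm_snd_le ((f x).1)).trans (norm_fst_le (f x))
      rwa [show (f x).1.2 = (ω3 x).im from by rw [hfdef], Real.norm_eq_abs] at h
    have hv5 : |(ω5 x).im| ≤ ‖f x‖ := by
      have h : ‖(f x).2.1‖ ≤ ‖f x‖ := (norm_fst_le ((f x).2)).trans (norm_snd_le (f x))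
      rwa [show (f x).2.1 = (ω5 x).im from by rw [hfdef], Real.norm_eq_abs] at h
    have hv7 : |(ω7 x).im| ≤ ‖f x‖ := by
      have h : ‖(f x).2.2‖ ≤ ‖f x‖ := (norm_snd_le ((f x).2)).trans (norm_snd_le (f x))
      rwa [show (f x).2.2 = (ω7 x).im from by rw [hfdef], Real.norm_eq_abs] at h
    -- positivity facts for linarith
    have p1 : (0:ℝ) ≤ |ν / δ ^ 2| := abs_nonneg _
    have p2 : (0:ℝ) ≤ |ν| := abs_nonneg _
    have p3 : (0:ℝ) ≤ |ν * (1 + δ ^ 2) / δ ^ 2| := abs_nonneg _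
    have p4 : (0:ℝ) ≤ M * |1 / (δ * (1 + δ ^ 2))| := mul_nonneg hM0 (abs_nonneg _)
    have p5 : (0:ℝ) ≤ M * |δ ^ 3 / (1 + δ ^ 2)| := mul_nonneg hM0 (abs_nonneg _)
    have p6 : (0:ℝ) ≤ M * |(δ ^ 2 - 1) / δ| := mul_nonneg hM0 (abs_nonneg _)
    have p7 : (0:ℝ) ≤ M ^ 2 * |3 * δ ^ 6 / (2 * ν * (4 + δ ^ 2) * (1 + δ ^ 2) ^ 2)| :=
      mul_nonneg (sq_nonneg _) (abs_nonneg _)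
    have p8 : (0:ℝ) ≤ M ^ 2 * |3 * δ ^ 2 / (2 * ν * (1 + 4 * δ ^ 2) * (1 + δ ^ 2) ^ 2)| :=
      mul_nonneg (sq_nonneg _) (abs_nonneg _)
    have p9 : (0:ℝ) ≤ M ^ 2 * |δ ^ 6 * (3 + δ ^ 2) / (2 * ν * (4 + δ ^ 2) * (1 + δ ^ 2))| :=
      mul_nonneg (sq_nonneg _) (abs_nonneg _)
    have p10 : (0:ℝ) ≤ M ^ 2 * |(1 + 3 * δ ^ 2) / (2 * ν * δ ^ 2 * (1 + 4 * δ ^ 2) * (1 + δ ^ 2))| :=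
      mul_nonneg (sq_nonneg _) (abs_nonneg _)
    -- component 1
    have c1 : |(E1fun ν δ (ω1 x) (ω3 x) (ω5 x) (ω7 x)).im| ≤ K * ‖f x‖ := by
      rw [im1]
      refine (lin_bound4 _ _ _ _ _ _ _ _ _ hv1 hv3 hv5 hv7).trans
        (mul_le_mul_of_nonneg_right ?_ hV)
      have t1 : |(-(ν / δ ^ 2) + (3 * δ ^ 6 / (2 * ν * (4 + δ ^ 2) * (1 + δ ^ 2) ^ 2))
            * (‖ω5 x‖ ^ 2 + ‖ω7 x‖ ^ 2))|
          ≤ |ν / δ ^ 2| + |3 * δ ^ 6 / (2 * ν * (4 + δ ^ 2) * (1 + δ ^ 2) ^ 2)| * (2 * M ^ 2) := by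
        refine (abs_add_le _ _).trans ?_
        rw [abs_neg, abs_mul]
        gcongr
        rw [_root_.abs_of_nonneg (add_nonneg (pow_nonneg (norm_nonneg _) 2)
          (pow_nonneg (norm_nonneg _) 2))]
        linarith
      have t2 : |(1 / (δ * (1 + δ ^ 2))) * ((ω7 x).re + (ω5 x).re)|
          ≤ |1 / (δ * (1 + δ ^ 2))| * (2 * M) := by
        rw [abs_mul]
        exact mul_le_mul_of_nonneg_left ((abs_add_le _ _).trans (by linarith)) (abs_nonneg _)
      have t3 : |(-((1 / (δ * (1 + δ ^ 2))) * (ω3 x).re))| ≤ |1 / (δ * (1 + δ ^ 2))| * M := by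
        rw [abs_neg, abs_mul]
        exact mul_le_mul_of_nonneg_left hre3 (abs_nonneg _)
      have t4 : |(1 / (δ * (1 + δ ^ 2))) * (ω3 x).re| ≤ |1 / (δ * (1 + δ ^ 2))| * M := by
        rw [abs_mul]
        exact mul_le_mul_of_nonneg_left hre3 (abs_nonneg _)
      rw [hKdef]
      linarith
    -- component 3
    have c3 : |(E3fun ν δ (ω1 x) (ω3 x) (ω5 x) (ω7 x)).im| ≤ K * ‖f x‖ := by
      rw [im3]
      refine (lin_bound4 _ _ _ _ _ _ _ _ _ hv1 hv3 hv5 hv7).trans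
        (mul_le_mul_of_nonneg_right ?_ hV)
      have t1 : |(-((δ ^ 3 / (1 + δ ^ 2)) * ((ω5 x).re + (ω7 x).re)))|
          ≤ |δ ^ 3 / (1 + δ ^ 2)| * (2 * M) := by
        rw [abs_neg, abs_mul]
        exact mul_le_mul_of_nonneg_left ((abs_add_le _ _).trans (by linarith)) (abs_nonneg _)
      have t2 : |(-ν + (3 * δ ^ 2 / (2 * ν * (1 + 4 * δ ^ 2) * (1 + δ ^ 2) ^ 2))
            * (‖ω5 x‖ ^ 2 + ‖ω7 x‖ ^ 2))|
          ≤ |ν| + |3 * δ ^ 2 / (2 * ν * (1 + 4 * δ ^ 2) * (1 + δ ^ 2) ^ 2)| * (2 * M ^ 2) := by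
        refine (abs_add_le _ _).trans ?_
        rw [abs_neg, abs_mul]
        gcongr
        rw [_root_.abs_of_nonneg (add_nonneg (pow_nonneg (norm_nonneg _) 2)
          (pow_nonneg (norm_nonneg _) 2))]
        linarith
      have t3 : |(δ ^ 3 / (1 + δ ^ 2)) * (ω1 x).re| ≤ |δ ^ 3 / (1 + δ ^ 2)| * M := by
        rw [abs_mul]
        exact mul_le_mul_of_nonneg_left hre1 (abs_nonneg _)
      rw [hKdef]
      linarith
    -- component 5
    have c5 : |(E5fun ν δ (ω1 x) (ω3 x) (ω5 x) (ω7 x)).im| ≤ K * ‖f x‖ := by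
      rw [im5]
      refine (lin_bound4 _ _ _ _ _ _ _ _ _ hv1 hv3 hv5 hv7).trans
        (mul_le_mul_of_nonneg_right ?_ hV)
      have t1 : |(-(((δ ^ 2 - 1) / δ) * (ω3 x).re))| ≤ |(δ ^ 2 - 1) / δ| * M := by
        rw [abs_neg, abs_mul]
        exact mul_le_mul_of_nonneg_left hre3 (abs_nonneg _)
      have t2 : |(-(((δ ^ 2 - 1) / δ) * (ω1 x).re))| ≤ |(δ ^ 2 - 1) / δ| * M := by
        rw [abs_neg, abs_mul]
        exact mul_le_mul_of_nonneg_left hre1 (abs_nonneg _)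
      have t3 : |(-(ν * (1 + δ ^ 2) / δ ^ 2)
            - (δ ^ 6 * (3 + δ ^ 2) / (2 * ν * (4 + δ ^ 2) * (1 + δ ^ 2))) * ‖ω1 x‖ ^ 2
            - ((1 + 3 * δ ^ 2) / (2 * ν * δ ^ 2 * (1 + 4 * δ ^ 2) * (1 + δ ^ 2)))
                * ‖ω3 x‖ ^ 2)|
          ≤ |ν * (1 + δ ^ 2) / δ ^ 2|
            + |δ ^ 6 * (3 + δ ^ 2) / (2 * ν * (4 + δ ^ 2) * (1 + δ ^ 2))| * M ^ 2
            + |(1 + 3 * δ ^ 2) / (2 * ν * δ ^ 2 * (1 + 4 * δ ^ 2) * (1 + δ ^ 2))| * M ^ 2 := by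
        refine (abs_sub _ _).trans ?_
        refine add_le_add ((abs_sub _ _).trans (add_le_add (by rw [abs_neg]) ?_)) ?_
        · rw [abs_mul]
          refine mul_le_mul_of_nonneg_left ?_ (abs_nonneg _)
          rw [_root_.abs_of_nonneg (pow_nonneg (norm_nonneg _) 2)]; exact hA1
        · rw [abs_mul]
          refine mul_le_mul_of_nonneg_left ?_ (abs_nonneg _)
          rw [_root_.abs_of_nonneg (pow_nonneg (norm_nonneg _) 2)]; exact hA3
      have t4 : |(0:ℝ)| = 0 := abs_zero
      rw [hKdef]
      linarith
    -- component 7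
    have c7 : |(E7fun ν δ (ω1 x) (ω3 x) (ω5 x) (ω7 x)).im| ≤ K * ‖f x‖ := by
      rw [im7]
      refine (lin_bound4 _ _ _ _ _ _ _ _ _ hv1 hv3 hv5 hv7).trans
        (mul_le_mul_of_nonneg_right ?_ hV)
      have t1 : |((((δ ^ 2 - 1) / δ) * (ω3 x).re))| ≤ |(δ ^ 2 - 1) / δ| * M := by
        rw [abs_mul]
        exact mul_le_mul_of_nonneg_left hre3 (abs_nonneg _)
      have t2 : |(-(((δ ^ 2 - 1) / δ) * (ω1 x).re))| ≤ |(δ ^ 2 - 1) / δ| * M := by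
        rw [abs_neg, abs_mul]
        exact mul_le_mul_of_nonneg_left hre1 (abs_nonneg _)
      have t3 : |(-(ν * (1 + δ ^ 2) / δ ^ 2)
            - (δ ^ 6 * (3 + δ ^ 2) / (2 * ν * (4 + δ ^ 2) * (1 + δ ^ 2))) * ‖ω1 x‖ ^ 2
            - ((1 + 3 * δ ^ 2) / (2 * ν * δ ^ 2 * (1 + 4 * δ ^ 2) * (1 + δ ^ 2)))
                * ‖ω3 x‖ ^ 2)|
          ≤ |ν * (1 + δ ^ 2) / δ ^ 2|
            + |δ ^ 6 * (3 + δ ^ 2) / (2 * ν * (4 + δ ^ 2) * (1 + δ ^ 2))| * M ^ 2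
            + |(1 + 3 * δ ^ 2) / (2 * ν * δ ^ 2 * (1 + 4 * δ ^ 2) * (1 + δ ^ 2))| * M ^ 2 := by
        refine (abs_sub _ _).trans ?_
        refine add_le_add ((abs_sub _ _).trans (add_le_add (by rw [abs_neg]) ?_)) ?_
        · rw [abs_mul]
          refine mul_le_mul_of_nonneg_left ?_ (abs_nonneg _)
          rw [_root_.abs_of_nonneg (pow_nonneg (norm_nonneg _) 2)]; exact hA1
        · rw [abs_mul]
          refine mul_le_mul_of_nonneg_left ?_ (abs_nonneg _)
          rw [_root_.abs_of_nonneg (pow_nonneg (norm_nonneg _) 2)]; exact hA3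
      have t4 : |(0:ℝ)| = 0 := abs_zero
      rw [hKdef]
      linarith
    rw [add_zero, hDdef]
    refine le_trans (le_of_eq (prod_norm_eq _)) ?_
    exact max_le (max_le c1 c3) (max_le c5 c7)
  -- Grönwall
  have key := norm_le_gronwallBound_of_norm_deriv_right_le hfc hfd ha hbound T ⟨hT, le_refl T⟩
  rw [gronwallBound_ε0_δ0] at key
  have hfT : f T = 0 := norm_le_zero_iff.mp key
  have := hfT
  rw [hfdef] at this
  simp only [Prod.ext_iff, Prod.fst_zero, Prod.snd_zero] at this
  exact ⟨this.1.1, this.1.2, this.2.1, this.2.2⟩
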